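/- The closed real intervals Set.Icc (ε·c − r) (ε·c + r), where ε ∈ {1, −1} and (c, r) ranges over the family consisting of (α(n,k), ρ(n)) for n ≥ 1, 0 ≤ k ≤ 2^(n−1)−1, together with (p(n,k)+17·σ(n,m), σ(n,m)), (p(n,k)+13·σ(n,m), σ(n,m)), (q̃(n,k)−13·σ(n,m), σ(n,m)) and (q̃(n,k)−17·σ(n,m), σ(n,m)) for n, m ≥ 1 and 0 ≤ k ≤ 2^(n−1)−1, are pairwise disjoint: any two such intervals with distinct parameters have empty intersection. -/

import Mathlib

open UpperHalfPlane MatrixGroups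

noncomputable section

/-- `s k = Σᵢ 2·tᵢ·3ⁱ` where `k = Σᵢ tᵢ·2ⁱ` is the binary expansion of `k`;
equivalently `s 0 = 0`, `s (2j) = 3·(s j)`, `s (2j+1) = 3·(s j) + 2`. -/
def s : ℕ → ℕ
  | 0 => 0
  | k + 1 =>
    if (k + 1) % 2 = 0 then 3 * s ((k + 1) / 2)
    else 3 * s ((k + 1) / 2) + 2
decreasing_by all_goals (simp_wf; omega)

/-- Left endpoint of the middle third removed at stage `n` from the `k`-th interval of
stage `n−1` of the middle-thirds construction on `[1,2]`. -/
def pB (n k : ℕ) : ℝ := 1 + (3 * s k + 1) / 3 ^ n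

/-- Right endpoint of the middle third removed at stage `n` from the `k`-th interval of
stage `n−1` of the middle-thirds construction on `[1,2]`. -/
def qB (n k : ℕ) : ℝ := 1 + (3 * s k + 2) / 3 ^ n

/-- `α(n,k)`, the midpoint of the removed middle third. -/
def alphaB (n k : ℕ) : ℝ := (pB n k + qB n k) / 2

/-- `q̃(n,k) := q(n,k) − 1/(6·3^n)`. -/
def qtB (n k : ℕ) : ℝ := qB n k - 1 / (6 * 3 ^ n)

/-- `ρ(n) := 1/(12·3^n)`. -/
def rhoB (n : ℕ) : ℝ := 1 / (12 * 3 ^ n)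

/-- `σ(n,m) := 1/(60·3^n·2^m)`. -/
def sigB (n m : ℕ) : ℝ := 1 / (60 * 3 ^ n * 2 ^ m)

lemma rhoB_ne (n : ℕ) : rhoB n ≠ 0 := by unfold rhoB; positivity

lemma sigB_ne (n m : ℕ) : sigB n m ≠ 0 := by unfold sigB; positivity

/-- Index type for the family of half-circle data of the Blooming Cantor tree construction:
either a pair `(n,k)` (the central circles) or a tuple `(n,m,k,i)` with `i ∈ Fin 4`
selecting one of the four sequences of small circles. -/
def BIdx := (ℕ × ℕ) ⊕ (ℕ × ℕ × ℕ × Fin 4)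

/-- The center associated to an index. -/
def ctr : BIdx → ℝ
  | .inl (n, k) => alphaB n k
  | .inr (n, m, k, i) =>
    if i = 0 then pB n k + 17 * sigB n m
    else if i = 1 then pB n k + 13 * sigB n m
    else if i = 2 then qtB n k - 13 * sigB n m
    else qtB n k - 17 * sigB n m

/-- The radius associated to an index. -/
def rad : BIdx → ℝ
  | .inl (n, _) => rhoB n
  | .inr (n, m, _, _) => sigB n m

/-- The validity condition on the parameters of an index. -/
def validIdx : BIdx → Prop
  | .inl (n, k) => 1 ≤ n ∧ k < 2 ^ (n - 1)
  | .inr (n, m, k, _) => 1 ≤ n ∧ 1 ≤ m ∧ k < 2 ^ (n - 1)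


/-! ### Auxiliary lemmas -/

lemma s_rec (k : ℕ) : s k = 3 * s (k / 2) + (if k % 2 = 0 then 0 else 2) := by
  match k with
  | 0 => simp [s]
  | k + 1 => rw [s]; split <;> omega

lemma s_digit (k : ℕ) : ∀ e, (s k / 3 ^ e) % 3 ≠ 1 := by
  induction k using Nat.strong_induction_on with
  | _ k ih =>
    intro e
    have hr := s_rec k
    cases e with
    | zero =>
      simp only [pow_zero, Nat.div_one]
      split at hr <;> omega
    | succ e =>
      rcases Nat.eq_zero_or_pos k with rfl | hpos
      · simp [s]
      · have h2 : k / 2 < k := Nat.div_lt_self hpos (by norm_num)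
        have hkey : s k / 3 ^ (e + 1) = s (k / 2) / 3 ^ e := by
          have h3 : s k / 3 = s (k / 2) := by split at hr <;> omega
          rw [pow_succ', ← Nat.div_div_eq_div_mul, h3]
        rw [hkey]
        exact ih (k / 2) h2 e

lemma s_eq_zero {k : ℕ} (h : s k = 0) : k = 0 := by
  induction k using Nat.strong_induction_on with
  | _ k ih =>
    have hr := s_rec k
    rcases Nat.eq_zero_or_pos k with rfl | hpos
    · rfl
    · have h2 : k / 2 < k := Nat.div_lt_self hpos (by norm_num)
      have hz : s (k / 2) = 0 := by split at hr <;> omega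
      have := ih (k / 2) h2 hz
      split at hr <;> omega

lemma s_inj : Function.Injective s := by
  intro a b h
  induction a using Nat.strong_induction_on generalizing b with
  | _ a ih =>
    rcases Nat.eq_zero_or_pos a with rfl | hpos
    · exact (s_eq_zero (by simpa [s] using h.symm)).symm
    · have ha := s_rec a
      have hb := s_rec b
      have h2 : a / 2 < a := Nat.div_lt_self hpos (by norm_num)
      have hs : s (a / 2) = s (b / 2) := by split at ha <;> split at hb <;> omega
      have := ih (a / 2) h2 hs
      split at ha <;> split at hb <;> omega

lemma gap_int (n k n' k' : ℕ) (hnn : n ≤ n') (hne : (n, k) ≠ (n', k')) :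
    (3 * s k + 2) * 3 ^ (n' - n) ≤ 3 * s k' + 1 ∨ 3 * s k' + 2 ≤ (3 * s k + 1) * 3 ^ (n' - n) := by
  by_contra h
  push_neg at h
  obtain ⟨h1, h2⟩ := h
  rcases Nat.eq_zero_or_pos (n' - n) with hd | hd
  · rw [hd] at h1 h2
    simp at h1 h2
    have : s k = s k' := by omega
    have hk : k = k' := s_inj this
    have : n = n' := by omega
    exact hne (by simp [hk, this])
  · obtain ⟨e, he⟩ : ∃ e, n' - n = e + 1 := ⟨n' - n - 1, by omega⟩
    rw [he, pow_succ'] at h1 h2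
    set P := 3 ^ e with hP
    have hPpos : 0 < P := Nat.pow_pos (by norm_num)
    set X := (3 * s k + 1) * P with hX
    have hXle : X ≤ s k' := by
      have : (3 * s k + 1) * (3 * P) = 3 * X := by ring
      omega
    have hXlt : s k' < X + P := by
      have : (3 * s k + 2) * (3 * P) = 3 * X + 3 * P := by ring
      omega
    have hdiv : s k' / P = 3 * s k + 1 := by
      apply Nat.div_eq_of_lt_le (by omega)
      have : (3 * s k + 1 + 1) * P = X + P := by ring
      omega
    have := s_digit k' e
    rw [← hP] at this
    omega

lemma pow3_pos (n : ℕ) : (0:ℝ) < 3 ^ n := by positivity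

lemma gap_real_aux {n k n' k' : ℕ} (hnn : n ≤ n')
    (hint : (3 * s k + 2) * 3 ^ (n' - n) ≤ 3 * s k' + 1) : qB n k ≤ pB n' k' := by
  have hnat : (3 * s k + 2) * 3 ^ n' ≤ (3 * s k' + 1) * 3 ^ n := by
    calc (3 * s k + 2) * 3 ^ n' = (3 * s k + 2) * 3 ^ (n' - n) * 3 ^ n := by
          rw [mul_assoc, ← pow_add]; congr 2; omega
    _ ≤ (3 * s k' + 1) * 3 ^ n := Nat.mul_le_mul_right _ hint
  have hr : ((3 * s k + 2 : ℕ) : ℝ) * 3 ^ n' ≤ ((3 * s k' + 1 : ℕ) : ℝ) * 3 ^ n := by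
    exact_mod_cast hnat
  push_cast at hr
  unfold qB pB
  have h1 : (3 * (s k : ℝ) + 2) / 3 ^ n ≤ (3 * (s k' : ℝ) + 1) / 3 ^ n' := by
    rw [div_le_div_iff₀ (pow3_pos n) (pow3_pos n')]
    linarith
  linarith

lemma gap_real_aux2 {n k n' k' : ℕ} (hnn : n ≤ n')
    (hint : 3 * s k' + 2 ≤ (3 * s k + 1) * 3 ^ (n' - n)) : qB n' k' ≤ pB n k := by
  have hnat : (3 * s k' + 2) * 3 ^ n ≤ (3 * s k + 1) * 3 ^ n' := by
    calc (3 * s k' + 2) * 3 ^ n ≤ (3 * s k + 1) * 3 ^ (n' - n) * 3 ^ n :=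
          Nat.mul_le_mul_right _ hint
    _ = (3 * s k + 1) * 3 ^ n' := by rw [mul_assoc, ← pow_add]; congr 2; omega
  have hr : ((3 * s k' + 2 : ℕ) : ℝ) * 3 ^ n ≤ ((3 * s k + 1 : ℕ) : ℝ) * 3 ^ n' := by
    exact_mod_cast hnat
  push_cast at hr
  unfold qB pB
  have h1 : (3 * (s k' : ℝ) + 2) / 3 ^ n' ≤ (3 * (s k : ℝ) + 1) / 3 ^ n := by
    rw [div_le_div_iff₀ (pow3_pos n') (pow3_pos n)]
    linarith
  linarith

lemma gap_real {n k n' k' : ℕ} (h : (n, k) ≠ (n', k')) :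
    qB n k ≤ pB n' k' ∨ qB n' k' ≤ pB n k := by
  rcases le_total n n' with hnn | hnn
  · rcases gap_int n k n' k' hnn h with h1 | h1
    · exact Or.inl (gap_real_aux hnn h1)
    · exact Or.inr (gap_real_aux2 hnn h1)
  · rcases gap_int n' k' n k hnn (Ne.symm h) with h1 | h1
    · exact Or.inr (gap_real_aux hnn h1)
    · exact Or.inl (gap_real_aux2 hnn h1)

lemma qB_eq (n k : ℕ) : qB n k = pB n k + ((3:ℝ) ^ n)⁻¹ := by
  unfold qB pB
  have h : ((3:ℝ) ^ n) ≠ 0 := by positivity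
  field_simp
  ring

lemma qtB_eq (n k : ℕ) : qtB n k = pB n k + 5 / 6 * ((3:ℝ) ^ n)⁻¹ := by
  unfold qtB
  rw [qB_eq]
  have h : ((3:ℝ) ^ n) ≠ 0 := by positivity
  field_simp
  ring

lemma alphaB_eq (n k : ℕ) : alphaB n k = pB n k + 1 / 2 * ((3:ℝ) ^ n)⁻¹ := by
  unfold alphaB
  rw [qB_eq]
  ring

lemma rhoB_eq (n : ℕ) : rhoB n = 1 / 12 * ((3:ℝ) ^ n)⁻¹ := by
  unfold rhoB
  have h : ((3:ℝ) ^ n) ≠ 0 := by positivity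
  field_simp

lemma sigB_pos (n m : ℕ) : 0 < sigB n m := by unfold sigB; positivity

lemma sigB_le (n : ℕ) {m : ℕ} (h : 1 ≤ m) : 120 * sigB n m ≤ ((3:ℝ) ^ n)⁻¹ := by
  have h2 : (2:ℝ) ≤ 2 ^ m := by
    calc (2:ℝ) = 2 ^ 1 := (pow_one 2).symm
    _ ≤ 2 ^ m := by apply pow_le_pow_right₀ (by norm_num) h
  unfold sigB
  rw [mul_one_div, inv_eq_one_div, div_le_div_iff₀ (by positivity) (by positivity)]
  have h3 := pow3_pos n
  nlinarith

lemma sigB_half (n : ℕ) {m m' : ℕ} (h : m < m') : 2 * sigB n m' ≤ sigB n m := by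
  have h2 : (2:ℝ) * 2 ^ m ≤ 2 ^ m' := by
    calc (2:ℝ) * 2 ^ m = 2 ^ (m + 1) := by ring
    _ ≤ 2 ^ m' := by apply pow_le_pow_right₀ (by norm_num) (by omega)
  unfold sigB
  rw [mul_one_div, div_le_div_iff₀ (by positivity) (by positivity)]
  have h3 := pow3_pos n
  have h4 : (0:ℝ) < 2 ^ m := by positivity
  nlinarith

lemma pB_gt_one (n k : ℕ) : 1 < pB n k := by
  unfold pB
  have : (0:ℝ) < (3 * (s k : ℝ) + 1) / 3 ^ n := by positivity
  linarith

/-- The level `(n,k)` of an index. -/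
def lev : BIdx → ℕ × ℕ
  | .inl (n, k) => (n, k)
  | .inr (n, _, k, _) => (n, k)

lemma contain : ∀ i : BIdx, validIdx i →
    pB (lev i).1 (lev i).2 < ctr i - rad i ∧ ctr i + rad i < qB (lev i).1 (lev i).2 := by
  rintro (⟨n, k⟩ | ⟨n, m, k, i⟩) hv
  · have hE : (0:ℝ) < ((3:ℝ) ^ n)⁻¹ := by positivity
    simp only [ctr, rad, lev, alphaB_eq, rhoB_eq, qB_eq]
    constructor <;> linarith
  · obtain ⟨hn, hm, hk⟩ := hv
    have hE : (0:ℝ) < ((3:ℝ) ^ n)⁻¹ := by positivity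
    have hs := sigB_pos n m
    have hle := sigB_le n hm
    have hqt := qtB_eq n k
    have hq := qB_eq n k
    fin_cases i <;>
      simp only [ctr, rad, lev] <;> norm_num [Fin.ext_iff] <;> constructor <;> linarith

lemma ctr_pos (i : BIdx) (h : validIdx i) : 0 < ctr i - rad i := by
  have h1 := (contain i h).1
  have h2 := pB_gt_one (lev i).1 (lev i).2
  linarith

set_option maxHeartbeats 2000000 in
lemma sep (i₁ i₂ : BIdx) (h₁ : validIdx i₁) (h₂ : validIdx i₂) (hne : i₁ ≠ i₂) :
    ctr i₁ + rad i₁ < ctr i₂ - rad i₂ ∨ ctr i₂ + rad i₂ < ctr i₁ - rad i₁ := by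
  by_cases hl : lev i₁ = lev i₂
  · -- same level
    rcases i₁ with ⟨n, k⟩ | ⟨n, m, k, i⟩ <;> rcases i₂ with ⟨n', k'⟩ | ⟨n', m', k', i'⟩ <;>
      simp only [lev, Prod.mk.injEq] at hl <;> obtain ⟨rfl, rfl⟩ := hl
    · exact absurd rfl hne
    · -- central vs small
      obtain ⟨hn, hm, hk⟩ := h₂
      have hE : (0:ℝ) < ((3:ℝ) ^ n)⁻¹ := by positivity
      have hs := sigB_pos n m'
      have hle := sigB_le n hm
      have hqt := qtB_eq n k
      have ha := alphaB_eq n k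
      have hrho := rhoB_eq n
      fin_cases i' <;> simp only [ctr, rad] <;> norm_num [Fin.ext_iff] <;>
        first | (left; linarith) | (right; linarith)
    · -- small vs central
      obtain ⟨hn, hm, hk⟩ := h₁
      have hE : (0:ℝ) < ((3:ℝ) ^ n)⁻¹ := by positivity
      have hs := sigB_pos n m
      have hle := sigB_le n hm
      have hqt := qtB_eq n k
      have ha := alphaB_eq n k
      have hrho := rhoB_eq n
      fin_cases i <;> simp only [ctr, rad] <;> norm_num [Fin.ext_iff] <;>
        first | (left; linarith) | (right; linarith)
    · -- small vs small
      obtain ⟨hn, hm, hk⟩ := h₁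
      obtain ⟨hn', hm', hk'⟩ := h₂
      have hE : (0:ℝ) < ((3:ℝ) ^ n)⁻¹ := by positivity
      have hs := sigB_pos n m
      have hs' := sigB_pos n m'
      have hle := sigB_le n hm
      have hle' := sigB_le n hm'
      have hqt := qtB_eq n k
      rcases Nat.lt_trichotomy m m' with hmm | rfl | hmm
      · have hh := sigB_half n hmm
        fin_cases i <;> fin_cases i' <;> simp only [ctr, rad] <;> norm_num [Fin.ext_iff] <;>
          first | (left; linarith) | (right; linarith)
      · have hii : i ≠ i' := by rintro rfl; exact hne rfl
        fin_cases i <;> fin_cases i' <;> simp only [ctr, rad] <;> norm_num [Fin.ext_iff] <;>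
          first | (exact absurd rfl hii) | (left; linarith) | (right; linarith)
      · have hh := sigB_half n hmm
        fin_cases i <;> fin_cases i' <;> simp only [ctr, rad] <;> norm_num [Fin.ext_iff] <;>
          first | (left; linarith) | (right; linarith)
  · -- different levels
    obtain ⟨hp₁, hq₁⟩ := contain i₁ h₁
    obtain ⟨hp₂, hq₂⟩ := contain i₂ h₂
    have hlp : ((lev i₁).1, (lev i₁).2) ≠ ((lev i₂).1, (lev i₂).2) := by
      simpa using hl
    rcases gap_real hlp with h | h
    · left; linarith
    · right; linarith
/-- The closed intervals `[ε·c − r, ε·c + r]`, for `ε ∈ {1,−1}` and `(c,r)` ranging over the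
family of half-circle data of the Blooming Cantor tree construction, are pairwise disjoint. -/
theorem stmt_15 :
    ∀ (b₁ b₂ : Bool) (i₁ i₂ : BIdx), validIdx i₁ → validIdx i₂ → (b₁, i₁) ≠ (b₂, i₂) →
      Disjoint
        (Set.Icc ((if b₁ then (1 : ℝ) else -1) * ctr i₁ - rad i₁)
          ((if b₁ then (1 : ℝ) else -1) * ctr i₁ + rad i₁))
        (Set.Icc ((if b₂ then (1 : ℝ) else -1) * ctr i₂ - rad i₂)
          ((if b₂ then (1 : ℝ) else -1) * ctr i₂ + rad i₂)) := by
  intro b₁ b₂ i₁ i₂ h₁ h₂ hne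
  rw [Set.disjoint_left]
  rintro x ⟨hx1, hx2⟩ ⟨hy1, hy2⟩
  by_cases hb : b₁ = b₂
  · subst hb
    have hii : i₁ ≠ i₂ := fun h => hne (by rw [h])
    rcases sep i₁ i₂ h₁ h₂ hii with h | h <;>
        cases b₁ <;> norm_num at hx1 hx2 hy1 hy2 <;> linarith
  · have p1 : 0 < ctr i₁ - rad i₁ := ctr_pos i₁ h₁
    have p2 : 0 < ctr i₂ - rad i₂ := ctr_pos i₂ h₂
    cases b₁ <;> cases b₂ <;>
      first
        | exact absurd rfl hb
        | (norm_num at hx1 hx2 hy1 hy2; linarith)
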